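/- arXiv:2305.08951 — 3 statements merged into one kernel-verified Lean document; each statement's English description precedes it below -/
import Mathlib

section
/- Let d(s) = exp(s·G_d) be a linear continuous dilation in ℝⁿ and let h : ℝⁿ → ℝ satisfy h(d(s)x) = e^{νs}·h(x) for all x ∈ ℝⁿ and all s ∈ ℝ, for some ν ∈ ℝ. If h is continuous at 0, then either h is a constant function, or ν > 0 and h(0) = 0. -/
open Matrix Filter Topology Set

/-- The linear continuous group `d(s) = exp (s • G)` generated by `G`. -/
noncomputable def dilMat {n : ℕ} (G : Matrix (Fin n) (Fin n) ℝ) (s : ℝ) :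
    Matrix (Fin n) (Fin n) ℝ := NormedSpace.exp (s • G)

/-- `d(s) = exp (s G)` is a dilation: `‖d(s)x‖ → ∞` as `s → ∞` and `‖d(s)x‖ → 0` as
`s → -∞`, for every `x ≠ 0` (this property does not depend on the choice of norm). -/
def IsDilation {n : ℕ} (G : Matrix (Fin n) (Fin n) ℝ) : Prop :=
  ∀ x : Fin n → ℝ, x ≠ 0 →
    Tendsto (fun s : ℝ => ‖dilMat G s *ᵥ x‖) atTop atTop ∧
    Tendsto (fun s : ℝ => ‖dilMat G s *ᵥ x‖) atBot (𝓝 0)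

/-- if a `d`-homogeneous function of degree `ν` is continuous at `0`, then
either it is constant, or `ν > 0` and `h 0 = 0`. -/
theorem stmt2 {n : ℕ} (G : Matrix (Fin n) (Fin n) ℝ) (hdil : IsDilation G)
    (h : (Fin n → ℝ) → ℝ) (ν : ℝ)
    (hhom : ∀ (s : ℝ) (x : Fin n → ℝ), h (dilMat G s *ᵥ x) = Real.exp (ν * s) * h x)
    (hcont : ContinuousAt h 0) :
    (∃ c : ℝ, ∀ x : Fin n → ℝ, h x = c) ∨ (0 < ν ∧ h 0 = 0) := by
  have h0 : ∀ s : ℝ, h 0 = Real.exp (ν * s) * h 0 := by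
    intro s
    have := hhom s 0
    rwa [Matrix.mulVec_zero] at this
  have hz : ν ≠ 0 → h 0 = 0 := by
    intro hνne
    have h1 := h0 1
    have hne : Real.exp (ν * 1) ≠ 1 := by
      rw [Ne, Real.exp_eq_one_iff]
      simpa using hνne
    have : (Real.exp (ν * 1) - 1) * h 0 = 0 := by linarith
    rcases mul_eq_zero.mp this with h' | h'
    · exact absurd (by linarith : Real.exp (ν * 1) = 1) hne
    · exact h'
  have key : ∀ x : Fin n → ℝ, x ≠ 0 →
      Tendsto (fun s : ℝ => h (dilMat G s *ᵥ x)) atBot (𝓝 (h 0)) := by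
    intro x hx
    have h2 := (hdil x hx).2
    have ht : Tendsto (fun s : ℝ => dilMat G s *ᵥ x) atBot (𝓝 0) :=
      tendsto_zero_iff_norm_tendsto_zero.mpr h2
    exact hcont.tendsto.comp ht
  rcases lt_trichotomy ν 0 with hν | hν | hν
  · -- ν < 0 : h is constantly 0
    left
    refine ⟨0, fun x => ?_⟩
    have hz0 : h 0 = 0 := hz (ne_of_lt hν)
    by_cases hx : x = 0
    · rw [hx, hz0]
    · have k := key x hx
      rw [hz0] at k
      have e0 : Tendsto (fun s : ℝ => Real.exp (-ν * s)) atBot (𝓝 0) := by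
        apply Real.tendsto_exp_atBot.comp
        exact (tendsto_id (α := ℝ)).const_mul_atBot (by linarith)
      have k2 : Tendsto (fun s : ℝ => Real.exp (-ν * s) * h (dilMat G s *ᵥ x))
          atBot (𝓝 0) := by
        simpa using e0.mul k
      have heq : (fun s : ℝ => Real.exp (-ν * s) * h (dilMat G s *ᵥ x)) =
          fun _ : ℝ => h x := by
        funext s
        rw [hhom, ← mul_assoc, ← Real.exp_add]
        ring_nf
        simp
      rw [heq] at k2
      exact tendsto_nhds_unique tendsto_const_nhds k2
  · -- ν = 0 : h is constant
    left
    refine ⟨h 0, fun x => ?_⟩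
    by_cases hx : x = 0
    · rw [hx]
    · have k := key x hx
      have heq : (fun s : ℝ => h (dilMat G s *ᵥ x)) = fun _ : ℝ => h x := by
        funext s
        rw [hhom, hν]
        simp
      rw [heq] at k
      exact tendsto_nhds_unique tendsto_const_nhds k
  · exact Or.inr ⟨hν, hz (ne_of_gt hν)⟩
end

section
/- Let d(s) = exp(s·G_d) be a linear continuous dilation in ℝⁿ and let g : ℝⁿ → ℝⁿ be continuous and d-homogeneous of degree μ ≤ 0. Then the system ẋ = g(x) is forward complete: for every initial condition x(t₀) = x₀ ∈ ℝⁿ, every maximal solution of ẋ = g(x) is defined for all t ≥ t₀ (equivalently, no solution blows up in finite forward time). -/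
open Matrix Filter Topology Set

namespace Stmt4Aux

attribute [local instance] Matrix.linftyOpSemiNormedRing Matrix.linftyOpNormedRing
  Matrix.linftyOpNormedAlgebra

variable {n : ℕ} (G : Matrix (Fin n) (Fin n) ℝ)

theorem dil_mul (s t : ℝ) : dilMat G s * dilMat G t = dilMat G (s + t) := by
  rw [dilMat, dilMat, dilMat, add_smul]
  exact (NormedSpace.exp_add_of_commute (((Commute.refl G).smul_left s).smul_right t)).symm

theorem dil_zero : dilMat G 0 = 1 := by simp [dilMat, NormedSpace.exp_zero]

theorem dil_dil (s : ℝ) (v : Fin n → ℝ) :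
    dilMat G s *ᵥ (dilMat G (-s) *ᵥ v) = v := by
  rw [Matrix.mulVec_mulVec, dil_mul, add_neg_cancel, dil_zero, Matrix.one_mulVec]

theorem dil_cont : Continuous fun s : ℝ => dilMat G s :=
  NormedSpace.exp_continuous.comp (continuous_id.smul continuous_const)

theorem dil_pow (s : ℝ) (k : ℕ) : dilMat G s ^ k = dilMat G (k * s) := by
  induction k with
  | zero => simp [dilMat, NormedSpace.exp_zero]
  | succ k ih =>
      rw [pow_succ, ih, dilMat, dilMat, dilMat, ← Matrix.exp_add_of_commute _ _
        (((Commute.refl G).smul_left _).smul_right _), ← add_smul]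
      congr 2; push_cast; ring

theorem norm_exp_le [Nonempty (Fin n)] (M : Matrix (Fin n) (Fin n) ℝ) :
    ‖NormedSpace.exp M‖ ≤ Real.exp ‖M‖ := by
  rw [NormedSpace.exp_eq_tsum ℝ]
  refine le_trans (norm_tsum_le_tsum_norm (NormedSpace.norm_expSeries_summable' M)) ?_
  rw [Real.exp_eq_exp_ℝ, NormedSpace.exp_eq_tsum_div]
  refine Summable.tsum_le_tsum (fun k => ?_) (NormedSpace.norm_expSeries_summable' M)
    (NormedSpace.expSeries_div_summable ‖M‖)
  have h1 : ‖((k.factorial : ℝ)⁻¹) • M ^ k‖ = ‖M ^ k‖ / (k.factorial : ℝ) := by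
    rw [norm_smul, Real.norm_eq_abs, abs_inv, abs_of_nonneg (by positivity), inv_mul_eq_div]
  rw [h1]
  gcongr
  exact norm_pow_le M k

theorem norm_le_sum_cols (A : Matrix (Fin n) (Fin n) ℝ) :
    ‖A‖ ≤ ∑ j, ‖A *ᵥ Pi.single j 1‖ := by
  have key : ‖A‖₊ ≤ ∑ j, ‖A *ᵥ Pi.single j 1‖₊ := by
    rw [Matrix.linfty_opNNNorm_def]
    refine Finset.sup_le fun i _ => Finset.sum_le_sum fun j _ => ?_
    rw [Matrix.mulVec_single_one, Pi.nnnorm_def]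
    exact Finset.le_sup (f := fun i' => ‖Aᵀ j i'‖₊) (Finset.mem_univ i)
  calc ‖A‖ = ((‖A‖₊ : ℝ)) := (coe_nnnorm A).symm
    _ ≤ ((∑ j, ‖A *ᵥ Pi.single j 1‖₊ : NNReal) : ℝ) := by exact_mod_cast key
    _ = ∑ j, ‖A *ᵥ Pi.single j 1‖ := by push_cast; rfl

theorem dil_growth [Nonempty (Fin n)] (τ : ℝ) (hτ : 0 ≤ τ) (v : Fin n → ℝ) :
    ‖dilMat G τ *ᵥ v‖ ≤ Real.exp (τ * ‖G‖) * ‖v‖ := by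
  refine le_trans (Matrix.linfty_opNorm_mulVec _ _) ?_
  gcongr
  refine le_trans (norm_exp_le _) ?_
  rw [norm_smul, Real.norm_eq_abs, abs_of_nonneg hτ]

theorem dil_norm_tendsto (hdil : IsDilation G) :
    Tendsto (fun s : ℝ => ‖dilMat G s‖) atBot (𝓝 0) := by
  have hb : ∀ s : ℝ, ‖dilMat G s‖ ≤ ∑ j, ‖dilMat G s *ᵥ Pi.single j 1‖ := fun s =>
    norm_le_sum_cols _
  have hsum : Tendsto (fun s : ℝ => ∑ j, ‖dilMat G s *ᵥ Pi.single j 1‖) atBot (𝓝 0) := by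
    have := tendsto_finset_sum (Finset.univ : Finset (Fin n))
      (fun j _ => (hdil (Pi.single j 1) (by
        intro h
        have := congrFun h j
        simp at this)).2)
    simpa using this
  exact squeeze_zero (fun s => norm_nonneg _) hb hsum

theorem dil_decay (hdil : IsDilation G) [Nonempty (Fin n)] :
    ∃ A α : ℝ, 1 ≤ A ∧ 0 < α ∧
      ∀ τ : ℝ, 0 ≤ τ → ‖dilMat G (-τ)‖ ≤ A * Real.exp (-(α * τ)) := by
  obtain ⟨s₀, hs₀⟩ := (eventually_atBot.1 ((dil_norm_tendsto G hdil).eventually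
    (eventually_le_nhds (by norm_num : (0:ℝ) < 1/2))))
  set s₁ : ℝ := max 1 (-s₀) with hs₁def
  have hs₁pos : 0 < s₁ := lt_of_lt_of_le one_pos (le_max_left _ _)
  have hhalf : ‖dilMat G (-s₁)‖ ≤ 1/2 := hs₀ _ (by
    have := le_max_right 1 (-s₀); linarith)
  obtain ⟨z, _, hz⟩ := (isCompact_Icc (a := -s₁) (b := 0)).exists_isMaxOn
    (nonempty_Icc.2 (by linarith)) ((dil_cont G).norm.continuousOn)
  set M : ℝ := max ‖dilMat G z‖ 1 with hMdef
  have hM1 : 1 ≤ M := le_max_right _ _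
  have hMb : ∀ w ∈ Icc (-s₁) (0:ℝ), ‖dilMat G w‖ ≤ M := fun w hw =>
    le_trans (hz hw) (le_max_left _ _)
  refine ⟨2 * M, Real.log 2 / s₁, by linarith, by positivity, fun τ hτ => ?_⟩
  set k : ℕ := ⌊τ / s₁⌋₊ with hkdef
  have hkd : (k : ℝ) ≤ τ / s₁ := Nat.floor_le (div_nonneg hτ hs₁pos.le)
  have hkd2 : τ / s₁ < (k : ℝ) + 1 := Nat.lt_floor_add_one _
  have hk1 : (k : ℝ) * s₁ ≤ τ := by
    have h := mul_le_mul_of_nonneg_right hkd hs₁pos.le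
    rwa [div_mul_cancel₀ τ hs₁pos.ne'] at h
  have hk2 : τ < ((k : ℝ) + 1) * s₁ := by
    have h := mul_lt_mul_of_pos_right hkd2 hs₁pos
    rwa [div_mul_cancel₀ τ hs₁pos.ne'] at h
  have hsplit : dilMat G (-τ) = dilMat G (-(τ - k * s₁)) * dilMat G (-s₁) ^ k := by
    rw [dil_pow, dilMat, dilMat, dilMat, ← Matrix.exp_add_of_commute _ _
      (((Commute.refl G).smul_left _).smul_right _), ← add_smul]
    congr 2; ring
  have hnorm : ‖dilMat G (-τ)‖ ≤ M * (1/2) ^ k := by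
    rw [hsplit]
    refine le_trans (norm_mul_le _ _) ?_
    have h1 : ‖dilMat G (-(τ - k * s₁))‖ ≤ M := by
      refine hMb _ ⟨?_, ?_⟩ <;> nlinarith
    have h2 : ‖dilMat G (-s₁) ^ k‖ ≤ (1/2) ^ k :=
      le_trans (norm_pow_le _ k) (pow_le_pow_left₀ (norm_nonneg _) hhalf k)
    exact mul_le_mul h1 h2 (norm_nonneg _) (by linarith)
  refine le_trans hnorm ?_
  rw [mul_comm (2:ℝ) M, mul_assoc]
  refine mul_le_mul_of_nonneg_left ?_ (by linarith)
  have hhalfpow : ((1:ℝ)/2) ^ k = Real.exp (-((k : ℝ) * Real.log 2)) := by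
    calc ((1:ℝ)/2) ^ k = Real.exp (Real.log (1/2)) ^ k := by
          rw [Real.exp_log]; norm_num
      _ = Real.exp ((k : ℝ) * Real.log (1/2)) := (Real.exp_nat_mul _ k).symm
      _ = Real.exp (-((k : ℝ) * Real.log 2)) := by
          rw [one_div, Real.log_inv]; ring_nf
  have hlog2 : 0 < Real.log 2 := Real.log_pos (by norm_num)
  have hrhs : (2:ℝ) * Real.exp (-(Real.log 2 / s₁ * τ)) =
      Real.exp (Real.log 2 - Real.log 2 / s₁ * τ) := by
    rw [Real.exp_sub, Real.exp_log two_pos, Real.exp_neg]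
    ring
  rw [hhalfpow, hrhs, Real.exp_le_exp]
  have heq : Real.log 2 / s₁ * τ = Real.log 2 * (τ / s₁) := by ring
  have hmul := mul_le_mul_of_nonneg_left hkd2.le hlog2.le
  linarith [heq ▸ hmul]

theorem escape {n : ℕ} (g : (Fin n → ℝ) → (Fin n → ℝ)) (L δ : ℝ) (hL0 : 0 ≤ L)
    (hLb : ∀ z : Fin n → ℝ, ‖z‖ ≤ 2 → ‖g z‖ ≤ L) (hδ : δ = 1 / (L + 1))
    (y : ℝ → Fin n → ℝ) (a c : ℝ)
    (hy : ∀ t ∈ Ico a c, HasDerivAt y (g (y t)) t) (h1 : ‖y a‖ ≤ 1) :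
    ∀ t ∈ Ico a c, t ≤ a + δ → ‖y t‖ ≤ 2 := by
  intro t ht htδ
  have hsub : Icc a t ⊆ Ico a c := fun u hu => ⟨hu.1, lt_of_le_of_lt hu.2 ht.2⟩
  have hδpos : 0 < δ := by rw [hδ]; positivity
  have hLδ : L * δ < 1 := by
    rw [hδ, mul_one_div, div_lt_one (by linarith)]; linarith
  by_contra hcon
  push_neg at hcon
  set B : Set ℝ := {u | u ∈ Icc a t ∧ 2 < ‖y u‖} with hB
  have hBne : B.Nonempty := ⟨t, ⟨⟨ht.1, le_rfl⟩, hcon⟩⟩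
  have hBbd : BddBelow B := ⟨a, fun u hu => hu.1.1⟩
  set u₀ := sInf B with hu₀
  have hu₀cl : u₀ ∈ closure B := csInf_mem_closure hBne hBbd
  have hu₀mem : u₀ ∈ Icc a t :=
    isClosed_Icc.closure_subset ((closure_mono (fun u hu => hu.1)) hu₀cl)
  have hcontAt : ∀ u ∈ Icc a t, ContinuousAt y u := fun u hu => (hy u (hsub hu)).continuousAt
  have hge : 2 ≤ ‖y u₀‖ := by
    have hne : (𝓝[B] u₀).NeBot := mem_closure_iff_nhdsWithin_neBot.1 hu₀cl
    refine ge_of_tendsto (((hcontAt u₀ hu₀mem).continuousWithinAt (s := B)).norm) ?_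
    exact eventually_mem_nhdsWithin.mono fun u hu => hu.2.le
  have hlt : ∀ u ∈ Ico a u₀, ‖y u‖ ≤ 2 := by
    intro u hu
    by_contra hc
    push_neg at hc
    exact absurd (csInf_le hBbd ⟨⟨hu.1, le_trans hu.2.le hu₀mem.2⟩, hc⟩) (not_le.2 hu.2)
  have hd : ∀ u ∈ Icc a u₀, HasDerivWithinAt y (g (y u)) (Icc a u₀) u := fun u hu =>
    (hy u (hsub ⟨hu.1, le_trans hu.2 hu₀mem.2⟩)).hasDerivWithinAt
  have hbound : ∀ u ∈ Ico a u₀, ‖g (y u)‖ ≤ L := fun u hu => hLb _ (hlt u hu)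
  have hest := norm_image_sub_le_of_norm_deriv_le_segment' hd hbound u₀ ⟨hu₀mem.1, le_rfl⟩
  have htri : ‖y u₀‖ - ‖y a‖ ≤ ‖y u₀ - y a‖ := norm_sub_norm_le _ _
  have hstep : u₀ - a ≤ δ := by
    have := hu₀mem.2
    linarith
  have := mul_le_mul_of_nonneg_left hstep hL0
  linarith


theorem dil_decay' (hdil : IsDilation G) [Nonempty (Fin n)] :
    ∃ A α : ℝ, 1 ≤ A ∧ 0 < α ∧
      ∀ τ : ℝ, 0 ≤ τ → ∀ v : Fin n → ℝ,
        ‖dilMat G (-τ) *ᵥ v‖ ≤ A * Real.exp (-(α * τ)) * ‖v‖ := by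
  obtain ⟨A, α, hA1, hα, hdec⟩ := dil_decay G hdil
  refine ⟨A, α, hA1, hα, fun τ hτ v => ?_⟩
  refine le_trans (Matrix.linfty_opNorm_mulVec _ _) ?_
  exact mul_le_mul_of_nonneg_right (hdec τ hτ) (norm_nonneg v)

theorem dil_growth' [Nonempty (Fin n)] :
    ∃ γ : ℝ, 0 ≤ γ ∧ ∀ τ : ℝ, 0 ≤ τ → ∀ v : Fin n → ℝ,
      ‖dilMat G τ *ᵥ v‖ ≤ Real.exp (τ * γ) * ‖v‖ :=
  ⟨‖G‖, norm_nonneg _, fun τ hτ v => dil_growth G τ hτ v⟩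

end Stmt4Aux

open Stmt4Aux in
/-- a continuous `d`-homogeneous vector field of degree `μ ≤ 0` generates a
forward complete system: no solution of `ẋ = g(x)` blows up in finite forward time, i.e.
every solution defined on a bounded forward interval `[t₀, T)` is bounded there. -/
theorem stmt4 {n : ℕ} (G : Matrix (Fin n) (Fin n) ℝ) (hdil : IsDilation G)
    (g : (Fin n → ℝ) → (Fin n → ℝ)) (μ : ℝ) (hμ : μ ≤ 0) (hg : Continuous g)
    (ghom : ∀ (s : ℝ) (x : Fin n → ℝ),
      g (dilMat G s *ᵥ x) = Real.exp (μ * s) • (dilMat G s *ᵥ g x)) :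
    ∀ (t₀ T : ℝ), t₀ < T → ∀ x : ℝ → (Fin n → ℝ),
      (∀ t ∈ Set.Ico t₀ T, HasDerivAt x (g (x t)) t) →
      ∃ C : ℝ, ∀ t ∈ Set.Ico t₀ T, ‖x t‖ ≤ C := by
  intro t₀ T hT x hx
  rcases Nat.eq_zero_or_pos n with hn | hn
  · refine ⟨0, fun t _ => ?_⟩
    have hx0 : x t = 0 := funext fun i => absurd i.2 (by omega)
    rw [hx0, norm_zero]
  haveI : Nonempty (Fin n) := ⟨⟨0, hn⟩⟩
  obtain ⟨A, α, hA1, hα, hdecay⟩ := dil_decay' G hdil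
  obtain ⟨γ, hγ0, hgrow⟩ := dil_growth' G
  -- bound for g on the ball of radius 2
  obtain ⟨L₀, hL₀⟩ := (isCompact_closedBall (0 : Fin n → ℝ) 2).exists_bound_of_continuousOn
    hg.continuousOn
  set L : ℝ := max L₀ 0 with hLdef
  have hL0 : 0 ≤ L := le_max_right _ _
  have hLb : ∀ z : Fin n → ℝ, ‖z‖ ≤ 2 → ‖g z‖ ≤ L := fun z hz =>
    le_trans (hL₀ z (mem_closedBall_zero_iff.2 hz)) (le_max_left _ _)
  set δ : ℝ := 1 / (L + 1) with hδdef
  have hδpos : 0 < δ := by rw [hδdef]; positivity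
  set F : ℝ → ℝ := fun r => 2 * (1 + r) +
    2 * Real.exp (γ * max 0 (Real.log (A * r) / α)) with hFdef
  have hF0 : ∀ r, 0 ≤ r → 0 ≤ F r := fun r hr => by
    have := Real.exp_pos (γ * max 0 (Real.log (A * r) / α))
    simp only [hFdef]; nlinarith
  have hFge : ∀ r, 0 ≤ r → r ≤ F r := fun r hr => by
    have := Real.exp_pos (γ * max 0 (Real.log (A * r) / α))
    simp only [hFdef]; nlinarith
  -- the rescaling step
  have step : ∀ a r, a ∈ Ico t₀ T → 0 ≤ r → ‖x a‖ ≤ r →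
      ∀ u ∈ Ico t₀ T, a ≤ u → u ≤ a + δ → ‖x u‖ ≤ F r := by
    intro a r ha hr hxa u hu hau huδ
    set τ : ℝ := max 0 (Real.log (A * r) / α) with hτdef
    have hτ0 : 0 ≤ τ := le_max_left _ _
    have hAr : A * r ≤ Real.exp (α * τ) := by
      rcases le_or_gt (A * r) 1 with h | h
      · exact le_trans h (Real.one_le_exp (by positivity))
      · have hpos : (0:ℝ) < A * r := by linarith
        have h3 : Real.log (A * r) / α ≤ τ := le_max_right _ _
        have h4 : Real.log (A * r) ≤ τ * α := (div_le_iff₀ hα).1 h3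
        calc A * r = Real.exp (Real.log (A * r)) := (Real.exp_log hpos).symm
          _ ≤ Real.exp (α * τ) := Real.exp_le_exp.2 (by linarith)
    set ee : ℝ := Real.exp (-(μ * τ)) with heedef
    have hee1 : 1 ≤ ee := Real.one_le_exp (by nlinarith)
    have heepos : 0 < ee := lt_of_lt_of_le one_pos hee1
    have hinv : Real.exp (μ * τ) * ee = 1 := by
      rw [heedef, ← Real.exp_add]; simp
    have heμ : Real.exp (μ * τ) ≤ 1 := Real.exp_le_one_iff.2 (by nlinarith)
    set c : ℝ := a + Real.exp (μ * τ) * (T - a) with hcdef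
    set y : ℝ → Fin n → ℝ := fun t => dilMat G (-τ) *ᵥ x (a + ee * (t - a)) with hydef
    have hy : ∀ t ∈ Ico a c, HasDerivAt y (g (y t)) t := by
      intro t htc
      have hmem : a + ee * (t - a) ∈ Ico t₀ T := by
        constructor
        · nlinarith [ha.1, htc.1]
        · have h5 : t - a < Real.exp (μ * τ) * (T - a) := by
            have h6 := htc.2
            simp only [hcdef] at h6
            linarith
          have h7 := mul_lt_mul_of_pos_left h5 heepos
          have h8 : ee * (Real.exp (μ * τ) * (T - a)) = T - a := by
            rw [← mul_assoc, mul_comm ee, hinv, one_mul]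
          linarith
      have hinner : HasDerivAt (fun t : ℝ => a + ee * (t - a)) ee t := by
        simpa using (((hasDerivAt_id t).sub_const a).const_mul ee).const_add a
      have hcomp : HasDerivAt (fun s : ℝ => x (a + ee * (s - a)))
          (ee • g (x (a + ee * (t - a)))) t := by
        have := (hx _ hmem).scomp t hinner
        simpa [Function.comp_def] using this
      have hlin := ((Matrix.mulVecLin
          (dilMat G (-τ))).toContinuousLinearMap.hasFDerivAt
          (x := x (a + ee * (t - a)))).comp_hasDerivAt t hcomp
      have hgy : g (y t) = (Matrix.mulVecLin (dilMat G (-τ))).toContinuousLinearMap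
          (ee • g (x (a + ee * (t - a)))) := by
        simp only [hydef, LinearMap.coe_toContinuousLinearMap', Matrix.mulVecLin_apply]
        rw [ghom, Matrix.mulVec_smul]
        congr 1
        rw [heedef]
        ring_nf
      have hyeq : y = fun s : ℝ => (Matrix.mulVecLin
          (dilMat G (-τ))).toContinuousLinearMap (x (a + ee * (s - a))) := by
        funext s
        simp [hydef]
      rw [hgy, hyeq]
      exact hlin
    have hya : ‖y a‖ ≤ 1 := by
      have hy0 : y a = dilMat G (-τ) *ᵥ x a := by simp [hydef]
      rw [hy0]
      refine le_trans (hdecay τ hτ0 (x a)) ?_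
      have hexp := Real.exp_pos (-(α * τ))
      calc A * Real.exp (-(α * τ)) * ‖x a‖ ≤ A * Real.exp (-(α * τ)) * r := by
            refine mul_le_mul_of_nonneg_left hxa (by positivity)
        _ = (A * r) * Real.exp (-(α * τ)) := by ring
        _ ≤ Real.exp (α * τ) * Real.exp (-(α * τ)) :=
            mul_le_mul_of_nonneg_right hAr hexp.le
        _ = 1 := by rw [← Real.exp_add]; simp
    set t₂ : ℝ := a + Real.exp (μ * τ) * (u - a) with ht₂def
    have hexpμ := Real.exp_pos (μ * τ)
    have ht₂mem : t₂ ∈ Ico a c := by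
      constructor
      · have h8 : 0 ≤ Real.exp (μ * τ) * (u - a) := by nlinarith
        simp only [ht₂def]; linarith
      · simp only [ht₂def, hcdef]
        have h9 := mul_lt_mul_of_pos_left (show u - a < T - a by linarith [hu.2]) hexpμ
        linarith
    have ht₂δ : t₂ ≤ a + δ := by
      have h10 : Real.exp (μ * τ) * (u - a) ≤ 1 * (u - a) :=
        mul_le_mul_of_nonneg_right heμ (by linarith)
      simp only [ht₂def]; linarith
    have hy2 := escape g L δ hL0 hLb hδdef y a c hy hya t₂ ht₂mem ht₂δ
    have harg : a + ee * (t₂ - a) = u := by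
      have h6 : t₂ - a = Real.exp (μ * τ) * (u - a) := by simp only [ht₂def]; ring
      rw [h6, ← mul_assoc, mul_comm ee, hinv, one_mul]; ring
    have hxu : x u = dilMat G τ *ᵥ y t₂ := by
      have h11 : y t₂ = dilMat G (-τ) *ᵥ x u := by
        simp only [hydef]
        rw [harg]
      rw [h11, dil_dil]
    calc ‖x u‖ = ‖dilMat G τ *ᵥ y t₂‖ := by rw [hxu]
      _ ≤ Real.exp (τ * γ) * ‖y t₂‖ := hgrow τ hτ0 _
      _ ≤ Real.exp (τ * γ) * 2 := mul_le_mul_of_nonneg_left hy2 (Real.exp_pos _).le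
      _ ≤ F r := by
          have h12 : Real.exp (τ * γ) * 2 = 2 * Real.exp (γ * τ) := by
            rw [mul_comm τ γ]; ring
          simp only [hFdef]
          rw [h12, ← hτdef]
          linarith
  -- iterate the step
  set r₀ : ℝ := ‖x t₀‖ with hr₀
  have hr₀0 : 0 ≤ r₀ := norm_nonneg _
  have hiter0 : ∀ j : ℕ, 0 ≤ F^[j] r₀ := by
    intro j
    induction j with
    | zero => simpa using hr₀0
    | succ j ih =>
        rw [Function.iterate_succ_apply']
        exact hF0 _ ih
  have main : ∀ j : ℕ, ∀ u ∈ Ico t₀ T, u ≤ t₀ + (j : ℝ) * δ → ‖x u‖ ≤ F^[j] r₀ := by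
    intro j
    induction j with
    | zero =>
        intro u hu hle
        simp only [Nat.cast_zero, zero_mul, add_zero] at hle
        have : u = t₀ := le_antisymm hle hu.1
        rw [this]
        simp [hr₀]
    | succ j ih =>
        intro u hu hle
        rcases le_or_gt u (t₀ + (j : ℝ) * δ) with hcase | hcase
        · refine le_trans (ih u hu hcase) ?_
          rw [Function.iterate_succ_apply']
          exact hFge _ (hiter0 j)
        · have haIco : t₀ + (j : ℝ) * δ ∈ Ico t₀ T := by
            constructor
            · have : 0 ≤ (j : ℝ) * δ := by positivity
              linarith
            · exact lt_trans hcase hu.2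
          have hxa : ‖x (t₀ + (j : ℝ) * δ)‖ ≤ F^[j] r₀ := ih _ haIco le_rfl
          have hres := step (t₀ + (j : ℝ) * δ) (F^[j] r₀) haIco (hiter0 j) hxa u hu
            hcase.le (by push_cast at hle ⊢; linarith)
          rw [Function.iterate_succ_apply']
          exact hres
  refine ⟨F^[⌈(T - t₀) / δ⌉₊] r₀, fun u hu => main _ u hu ?_⟩
  have h7 : (T - t₀) / δ ≤ (⌈(T - t₀) / δ⌉₊ : ℝ) := Nat.le_ceil _
  have h8 := mul_le_mul_of_nonneg_right h7 hδpos.le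
  rw [div_mul_cancel₀ _ hδpos.ne'] at h8
  linarith [hu.2]
end

section
/- Let d(s) = exp(s·G_d) be a linear continuous dilation in ℝⁿ and let Ω ⊆ ℝⁿ be a closed d-homogeneous cone, i.e., d(s)Ω ⊆ Ω for all s ∈ ℝ. Let C_Ω(x) denote the Bouligand tangent cone to Ω at x. Then C_Ω(d(s)x) = d(s)·C_Ω(x) for all x ∈ Ω and all s ∈ ℝ. -/
open Matrix Filter Topology Set

/-- The Bouligand tangent cone to `Ω` at `x`:
`C_Ω(x) = { z : liminf_{h→0⁺} (inf_{y∈Ω} ‖x + hz − y‖)/h = 0 }`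
(this set does not depend on the choice of the norm). -/
noncomputable def bouligand {n : ℕ} (Ω : Set (Fin n → ℝ)) (x : Fin n → ℝ) :
    Set (Fin n → ℝ) :=
  {z | Filter.liminf (fun h : ℝ => Metric.infDist (x + h • z) Ω / h) (𝓝[>] 0) = 0}

/-- `d(s) d(-s) = 1`. -/
lemma dilMat_mul_neg {n : ℕ} (G : Matrix (Fin n) (Fin n) ℝ) (s : ℝ) :
    dilMat G s * dilMat G (-s) = 1 := by
  unfold dilMat
  have hc : Commute (s • G) ((-s) • G) := ((Commute.refl G).smul_left s).smul_right (-s)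
  have h1 := (Matrix.exp_add_of_commute (s • G) ((-s) • G) hc).symm
  rw [← add_smul, add_neg_cancel, zero_smul, NormedSpace.exp_zero] at h1
  exact h1

/-- `d(-s) d(s) = 1`. -/
lemma dilMat_neg_mul {n : ℕ} (G : Matrix (Fin n) (Fin n) ℝ) (s : ℝ) :
    dilMat G (-s) * dilMat G s = 1 := by
  have := dilMat_mul_neg G (-s)
  rwa [neg_neg] at this

/-- If two nonnegative functions are comparable up to positive multiplicative constants,
then one has liminf zero iff the other does. -/
lemma liminf_aux {l : Filter ℝ} {F Gf : ℝ → ℝ} {K K' : ℝ} (hK : 0 < K) (hK' : 0 < K')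
    (hG0 : ∀ᶠ h in l, 0 ≤ Gf h)
    (hup : ∀ᶠ h in l, Gf h ≤ K * F h) (hlow : ∀ᶠ h in l, F h ≤ K' * Gf h)
    (hF : Filter.liminf F l = 0) : Filter.liminf Gf l = 0 := by
  rw [Filter.liminf_eq] at hF ⊢
  set SF := {a : ℝ | ∀ᶠ h in l, a ≤ F h} with hSF
  set SG := {a : ℝ | ∀ᶠ h in l, a ≤ Gf h} with hSG
  have h0G : (0 : ℝ) ∈ SG := hG0
  by_cases hbdd : BddAbove SF
  · have hle : ∀ a ∈ SG, a ≤ 0 := by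
      intro a ha
      have haK : a / K ∈ SF := by
        filter_upwards [ha, hup] with h h1 h2
        rw [div_le_iff₀ hK]
        nlinarith
      have h2 : a / K ≤ 0 := hF ▸ le_csSup hbdd haK
      by_contra hpos
      push_neg at hpos
      have := div_pos hpos hK
      linarith
    exact le_antisymm (csSup_le ⟨0, h0G⟩ hle) (le_csSup ⟨0, hle⟩ h0G)
  · have hGnb : ¬ BddAbove SG := by
      rintro ⟨M, hM⟩
      apply hbdd
      refine ⟨M * K', fun a ha => ?_⟩
      have haK : a / K' ∈ SG := by
        filter_upwards [ha, hlow] with h h1 h2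
        rw [div_le_iff₀ hK']
        nlinarith
      have h2 : a / K' ≤ M := hM haK
      rw [div_le_iff₀ hK'] at h2
      exact h2
    exact Real.sSup_of_not_bddAbove hGnb

/-- The infimum distance grows at most by the operator norm under a linear image. -/
lemma infDist_aux {n : ℕ} (f : (Fin n → ℝ) →L[ℝ] (Fin n → ℝ)) (w : Fin n → ℝ)
    {s : Set (Fin n → ℝ)} (hs : s.Nonempty) :
    Metric.infDist (f w) (f '' s) ≤ (‖f‖ + 1) * Metric.infDist w s := by
  have hK : (0 : ℝ) < ‖f‖ + 1 := by positivity
  have key : ¬ Metric.infDist w s < Metric.infDist (f w) (f '' s) / (‖f‖ + 1) := by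
    rw [Metric.infDist_lt_iff hs]
    rintro ⟨y, hy, hlt⟩
    have h1 : Metric.infDist (f w) (f '' s) ≤ dist (f w) (f y) :=
      Metric.infDist_le_dist_of_mem ⟨y, hy, rfl⟩
    have h2 : dist (f w) (f y) ≤ ‖f‖ * dist w y := by
      rw [dist_eq_norm, dist_eq_norm, ← map_sub]
      exact f.le_opNorm _
    have h3 : ‖f‖ * dist w y ≤ (‖f‖ + 1) * dist w y :=
      mul_le_mul_of_nonneg_right (by linarith) dist_nonneg
    rw [lt_div_iff₀ hK] at hlt
    nlinarith
  push_neg at key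
  rw [div_le_iff₀ hK] at key
  linarith [key]

lemma dil_image_superset {n : ℕ} (G : Matrix (Fin n) (Fin n) ℝ) (Ω : Set (Fin n → ℝ))
    (hcone : ∀ s : ℝ, (fun x => dilMat G s *ᵥ x) '' Ω ⊆ Ω) (s : ℝ) :
    Ω ⊆ (fun y => dilMat G s *ᵥ y) '' Ω := by
  intro y hy
  refine ⟨dilMat G (-s) *ᵥ y, hcone (-s) ⟨y, hy, rfl⟩, ?_⟩
  show dilMat G s *ᵥ (dilMat G (-s) *ᵥ y) = y
  rw [Matrix.mulVec_mulVec, dilMat_mul_neg, Matrix.one_mulVec]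

/-- The key one-sided inclusion. -/
lemma bouligand_incl {n : ℕ} (G : Matrix (Fin n) (Fin n) ℝ) (Ω : Set (Fin n → ℝ))
    (hcone : ∀ s : ℝ, (fun x => dilMat G s *ᵥ x) '' Ω ⊆ Ω) (x : Fin n → ℝ) (hx : x ∈ Ω)
    (s : ℝ) {z : Fin n → ℝ} (hz : z ∈ bouligand Ω x) :
    dilMat G s *ᵥ z ∈ bouligand Ω (dilMat G s *ᵥ x) := by
  classical
  have hΩne : Ω.Nonempty := ⟨x, hx⟩
  set f : (Fin n → ℝ) →L[ℝ] (Fin n → ℝ) :=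
    LinearMap.toContinuousLinearMap (Matrix.mulVecLin (dilMat G s)) with hfdef
  set f' : (Fin n → ℝ) →L[ℝ] (Fin n → ℝ) :=
    LinearMap.toContinuousLinearMap (Matrix.mulVecLin (dilMat G (-s))) with hf'def
  have hfapp : ∀ w, f w = dilMat G s *ᵥ w := fun w => rfl
  have hf'app : ∀ w, f' w = dilMat G (-s) *ᵥ w := fun w => rfl
  have hK : (0 : ℝ) < ‖f‖ + 1 := by positivity
  have hK' : (0 : ℝ) < ‖f'‖ + 1 := by positivity
  simp only [bouligand, Set.mem_setOf_eq] at hz ⊢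
  -- pointwise comparison of the two distance quotients
  have hcomb : ∀ w : Fin n → ℝ,
      Metric.infDist (dilMat G s *ᵥ w) Ω ≤ (‖f‖ + 1) * Metric.infDist w Ω ∧
      Metric.infDist w Ω ≤ (‖f'‖ + 1) * Metric.infDist (dilMat G s *ᵥ w) Ω := by
    intro w
    constructor
    · have h1 : Metric.infDist (dilMat G s *ᵥ w) Ω ≤
          Metric.infDist (dilMat G s *ᵥ w) ((fun y => dilMat G s *ᵥ y) '' Ω) :=
        Metric.infDist_le_infDist_of_subset (hcone s) (hΩne.image _)
      have h2 : Metric.infDist (f w) (f '' Ω) ≤ (‖f‖ + 1) * Metric.infDist w Ω :=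
        infDist_aux f w hΩne
      exact h1.trans h2
    · have hw : f' (dilMat G s *ᵥ w) = w := by
        rw [hf'app, Matrix.mulVec_mulVec, dilMat_neg_mul, Matrix.one_mulVec]
      have h1 : Metric.infDist w Ω ≤
          Metric.infDist w ((fun y => dilMat G (-s) *ᵥ y) '' Ω) :=
        Metric.infDist_le_infDist_of_subset (hcone (-s)) (hΩne.image _)
      have h2 : Metric.infDist (f' (dilMat G s *ᵥ w)) (f' '' Ω) ≤
          (‖f'‖ + 1) * Metric.infDist (dilMat G s *ᵥ w) Ω :=
        infDist_aux f' _ hΩne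
      rw [hw] at h2
      refine h1.trans ?_
      have : (fun y => dilMat G (-s) *ᵥ y) '' Ω = f' '' Ω := by
        simp [hf'app]
      rw [this]
      exact h2
  refine liminf_aux hK hK'
    (F := fun h : ℝ => Metric.infDist (x + h • z) Ω / h) ?_ ?_ ?_ hz
  · filter_upwards [self_mem_nhdsWithin] with h hh
    exact div_nonneg Metric.infDist_nonneg (le_of_lt hh)
  · filter_upwards [self_mem_nhdsWithin] with h hh
    have heq : dilMat G s *ᵥ x + h • (dilMat G s *ᵥ z) = dilMat G s *ᵥ (x + h • z) := by
      rw [Matrix.mulVec_add, Matrix.mulVec_smul]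
    have hh' : (0:ℝ) < h := hh
    rw [heq, ← mul_div_assoc]
    gcongr
    exact (hcomb (x + h • z)).1
  · filter_upwards [self_mem_nhdsWithin] with h hh
    have heq : dilMat G s *ᵥ x + h • (dilMat G s *ᵥ z) = dilMat G s *ᵥ (x + h • z) := by
      rw [Matrix.mulVec_add, Matrix.mulVec_smul]
    have hh' : (0:ℝ) < h := hh
    rw [heq, ← mul_div_assoc]
    gcongr
    exact (hcomb (x + h • z)).2

/-- for a closed `d`-homogeneous cone `Ω`, the Bouligand tangent cone is
`d`-homogeneous: `C_Ω(d(s)x) = d(s)·C_Ω(x)` for all `x ∈ Ω` and all `s`. -/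
theorem stmt6 {n : ℕ} (G : Matrix (Fin n) (Fin n) ℝ) (hdil : IsDilation G)
    (Ω : Set (Fin n → ℝ)) (hclosed : IsClosed Ω)
    (hcone : ∀ s : ℝ, (fun x => dilMat G s *ᵥ x) '' Ω ⊆ Ω) :
    ∀ x ∈ Ω, ∀ s : ℝ,
      bouligand Ω (dilMat G s *ᵥ x) = (fun z => dilMat G s *ᵥ z) '' bouligand Ω x := by
  intro x hx s
  ext w
  constructor
  · intro hw
    refine ⟨dilMat G (-s) *ᵥ w, ?_, ?_⟩
    · have h1 : dilMat G s *ᵥ x ∈ Ω := hcone s ⟨x, hx, rfl⟩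
      have h2 := bouligand_incl G Ω hcone _ h1 (-s) hw
      rwa [Matrix.mulVec_mulVec, dilMat_neg_mul, Matrix.one_mulVec] at h2
    · show dilMat G s *ᵥ (dilMat G (-s) *ᵥ w) = w
      rw [Matrix.mulVec_mulVec, dilMat_mul_neg, Matrix.one_mulVec]
  · rintro ⟨z, hz, rfl⟩
    exact bouligand_incl G Ω hcone x hx s hz
end
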